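/- arXiv:0712.1684 — 5 statements merged into one kernel-verified Lean document; each statement's English description precedes it below -/
import Mathlib

section
/- Let η ⊆ ℝ^d be a locally finite set whose convex hull is all of ℝ^d. Then for every a ∈ η, the Voronoi cell V_η(a) = {v ∈ ℝ^d : ‖v − a‖ ≤ ‖v − b‖ for all b ∈ η} is a compact convex set. -/
open Metric Set
open scoped RealInnerProductSpace

variable {d : ℕ}

lemma linmap (u : EuclideanSpace ℝ (Fin d)) :
    IsLinearMap ℝ (fun x : EuclideanSpace ℝ (Fin d) => ⟪x, u⟫) :=
  ⟨fun x y => inner_add_left _ _ _, fun c x => real_inner_smul_left _ _ _⟩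

lemma bisector_eq (a b : EuclideanSpace ℝ (Fin d)) :
    {v : EuclideanSpace ℝ (Fin d) | dist v a ≤ dist v b}
      = {v : EuclideanSpace ℝ (Fin d) | ⟪v, b - a⟫ ≤ (‖b‖^2 - ‖a‖^2)/2} := by
  ext v
  simp only [Set.mem_setOf_eq, dist_eq_norm]
  rw [← pow_le_pow_iff_left₀ (norm_nonneg _) (norm_nonneg _) (two_ne_zero),
    norm_sub_sq_real, norm_sub_sq_real, inner_sub_right]
  constructor <;> intro h <;> linarith

lemma bisector_convex (a b : EuclideanSpace ℝ (Fin d)) :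
    Convex ℝ {v : EuclideanSpace ℝ (Fin d) | dist v a ≤ dist v b} := by
  rw [bisector_eq]
  exact convex_halfSpace_le (linmap _) _

lemma bisector_closed (a b : EuclideanSpace ℝ (Fin d)) :
    IsClosed {v : EuclideanSpace ℝ (Fin d) | dist v a ≤ dist v b} :=
  isClosed_le (continuous_id.dist continuous_const) (continuous_id.dist continuous_const)

lemma key_dir (η : Set (EuclideanSpace ℝ (Fin d)))
    (hconv : convexHull ℝ η = Set.univ) (a u : EuclideanSpace ℝ (Fin d)) (hu : ‖u‖ = 1) :
    ∃ b ∈ η, 0 < ⟪b - a, u⟫ := by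
  by_contra h
  push_neg at h
  have hsub : η ⊆ {x : EuclideanSpace ℝ (Fin d) | ⟪x, u⟫ ≤ ⟪a, u⟫} := by
    intro b hb
    have := h b hb
    rw [inner_sub_left] at this
    simp only [Set.mem_setOf_eq]; linarith
  have := convexHull_min hsub (convex_halfSpace_le (linmap u) _)
  rw [hconv] at this
  have h2 := this (mem_univ (a + u))
  simp only [mem_setOf_eq, inner_add_left] at h2
  rw [real_inner_self_eq_norm_sq, hu] at h2
  norm_num at h2

/-- If `η ⊆ ℝ^d` is locally finite with `conv(η) = ℝ^d`, then every Voronoi cell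
`V_η(a)` is compact and convex. -/
theorem stmt_3 {d : ℕ} (η : Set (EuclideanSpace ℝ (Fin d)))
    (hloc : ∀ B : Set (EuclideanSpace ℝ (Fin d)), Bornology.IsBounded B → (η ∩ B).Finite)
    (hconv : convexHull ℝ η = Set.univ) (a : EuclideanSpace ℝ (Fin d)) (ha : a ∈ η) :
    IsCompact {v : EuclideanSpace ℝ (Fin d) | ∀ b ∈ η, dist v a ≤ dist v b} ∧
      Convex ℝ {v : EuclideanSpace ℝ (Fin d) | ∀ b ∈ η, dist v a ≤ dist v b} := by
  have hCeq : {v : EuclideanSpace ℝ (Fin d) | ∀ b ∈ η, dist v a ≤ dist v b}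
      = ⋂ b ∈ η, {v : EuclideanSpace ℝ (Fin d) | dist v a ≤ dist v b} := by
    ext v; simp [Set.mem_iInter]
  constructor
  · -- compact
    have hclosed : IsClosed {v : EuclideanSpace ℝ (Fin d) | ∀ b ∈ η, dist v a ≤ dist v b} := by
      rw [hCeq]; exact isClosed_biInter fun b _ => bisector_closed a b
    -- boundedness
    set S := Metric.sphere (0 : EuclideanSpace ℝ (Fin d)) 1 with hS
    choose b hbmem hbpos using fun u : S =>
      key_dir η hconv a u.1 (by simpa using mem_sphere_zero_iff_norm.mp u.2)
    set U : S → Set (EuclideanSpace ℝ (Fin d)) :=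
      fun i => {w | ⟪b i - a, i.1⟫ / 2 < ⟪b i - a, w⟫} with hU
    have hUopen : ∀ i, IsOpen (U i) := fun i =>
      isOpen_lt continuous_const (continuous_const.inner continuous_id)
    have hScov : S ⊆ ⋃ i, U i := by
      intro u hu
      refine mem_iUnion.2 ⟨⟨u, hu⟩, ?_⟩
      have := hbpos ⟨u, hu⟩
      simp only [hU, Set.mem_setOf_eq]
      linarith
    obtain ⟨t, ht⟩ := (isCompact_sphere (0 : EuclideanSpace ℝ (Fin d)) 1).elim_finite_subcover
      U hUopen hScov
    obtain ⟨M, hM⟩ := (t.image (fun i => ‖b i - a‖^2 / ⟪b i - a, i.1⟫)).bddAbove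
    have hbdd : Bornology.IsBounded
        {v : EuclideanSpace ℝ (Fin d) | ∀ b ∈ η, dist v a ≤ dist v b} := by
      apply Bornology.IsBounded.subset (Metric.isBounded_closedBall (x := a) (r := max 1 M))
      intro v hv
      simp only [Metric.mem_closedBall]
      by_contra hr
      push_neg at hr
      set r := ‖v - a‖ with hrdef
      have hrd : dist v a = r := dist_eq_norm v a
      have hr1 : (1 : ℝ) < r := lt_of_le_of_lt (le_max_left _ _) (by rwa [hrd] at hr)
      have hr0 : (0 : ℝ) < r := by linarith
      set w := r⁻¹ • (v - a) with hw
      have hwS : w ∈ S := by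
        rw [hS, mem_sphere_zero_iff_norm, hw, norm_smul, norm_inv, Real.norm_eq_abs,
          abs_of_pos hr0, ← hrdef, inv_mul_cancel₀ (ne_of_gt hr0)]
      obtain ⟨i, hit, hiw⟩ := Set.mem_iUnion₂.1 (ht hwS)
      have hc : 0 < ⟪b i - a, i.1⟫ := hbpos i
      have hinner : ⟪b i - a, w⟫ = r⁻¹ * ⟪b i - a, v - a⟫ := real_inner_smul_right _ _ _
      have hiw' : ⟪b i - a, i.1⟫ / 2 < r⁻¹ * ⟪b i - a, v - a⟫ := by
        rw [← hinner]; exact hiw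
      -- from Voronoi inequality
      have hvb := hv (b i) (hbmem i)
      have hsq : ‖v - a‖^2 ≤ ‖v - b i‖^2 := by
        rw [← dist_eq_norm, ← dist_eq_norm]
        exact pow_le_pow_left₀ dist_nonneg hvb 2
      have hexp : ‖v - b i‖^2 = ‖v - a‖^2 - 2 * ⟪v - a, b i - a⟫ + ‖b i - a‖^2 := by
        have : v - b i = (v - a) - (b i - a) := by abel
        rw [this, norm_sub_sq_real]
      have hkey : 2 * ⟪v - a, b i - a⟫ ≤ ‖b i - a‖^2 := by linarith [hsq, hexp]
      have hcomm : ⟪b i - a, v - a⟫ = ⟪v - a, b i - a⟫ := real_inner_comm _ _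
      -- r * c < 2 * inner ≤ ‖b i - a‖^2
      have h1 : r * ⟪b i - a, i.1⟫ < 2 * ⟪v - a, b i - a⟫ := by
        have h2 : r * (⟪b i - a, i.1⟫ / 2) < r * (r⁻¹ * ⟪b i - a, v - a⟫) :=
          (mul_lt_mul_iff_right₀ hr0).2 hiw'
        rw [← mul_assoc, mul_inv_cancel₀ (ne_of_gt hr0), one_mul, hcomm] at h2
        linarith
      have hMi : ‖b i - a‖^2 / ⟪b i - a, i.1⟫ ≤ M :=
        hM (Finset.mem_image_of_mem _ hit)
      have hMi' : ‖b i - a‖^2 ≤ M * ⟪b i - a, i.1⟫ := by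
        rw [div_le_iff₀ hc] at hMi; linarith
      have hrM : r > M := lt_of_le_of_lt (le_max_right 1 M) (by rwa [hrd] at hr)
      nlinarith
    exact Metric.isCompact_of_isClosed_isBounded hclosed hbdd
  · rw [hCeq]
    exact convex_iInter fun b => convex_iInter fun _ => bisector_convex a b
end

section
/- Let η ⊆ ℝ^d be locally finite. If X₁ and X₂ are two affinely independent (d+1)-point subsets of η such that for each i the open circumball of X_i contains no point of η, then the interiors of conv(X₁) and conv(X₂) are disjoint unless X₁ = X₂, in d = 2 assuming points of η in general position (no four points on a common circle). -/
/-- In the plane, for a locally finite set `η` in general position (no four points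
concyclic), two distinct Delone triangles (affinely independent triples of `η`
whose open circumball contains no point of `η`) have disjoint interiors. -/
theorem stmt_6 (η : Set (EuclideanSpace ℝ (Fin 2)))
    (hloc : ∀ B : Set (EuclideanSpace ℝ (Fin 2)), Bornology.IsBounded B → (η ∩ B).Finite)
    (hgen : ∀ (c : EuclideanSpace ℝ (Fin 2)) (r : ℝ),
      (η ∩ Metric.sphere c r).ncard ≤ 3)
    (X₁ X₂ : Finset (EuclideanSpace ℝ (Fin 2)))
    (hX₁η : (X₁ : Set (EuclideanSpace ℝ (Fin 2))) ⊆ η)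
    (hX₂η : (X₂ : Set (EuclideanSpace ℝ (Fin 2))) ⊆ η)
    (hcard₁ : X₁.card = 3) (hcard₂ : X₂.card = 3)
    (hind₁ : AffineIndependent ℝ (fun x : X₁ => (x : EuclideanSpace ℝ (Fin 2))))
    (hind₂ : AffineIndependent ℝ (fun x : X₂ => (x : EuclideanSpace ℝ (Fin 2))))
    (c₁ c₂ : EuclideanSpace ℝ (Fin 2)) (r₁ r₂ : ℝ)
    (hs₁ : ∀ p ∈ X₁, dist p c₁ = r₁) (hs₂ : ∀ p ∈ X₂, dist p c₂ = r₂)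
    (hb₁ : η ∩ Metric.ball c₁ r₁ = ∅) (hb₂ : η ∩ Metric.ball c₂ r₂ = ∅)
    (hne : X₁ ≠ X₂) :
    Disjoint (interior (convexHull ℝ (X₁ : Set (EuclideanSpace ℝ (Fin 2)))))
      (interior (convexHull ℝ (X₂ : Set (EuclideanSpace ℝ (Fin 2))))) := by

  classical
  -- basic facts
  have hX₁ne : X₁.Nonempty := Finset.card_pos.mp (by omega)
  have hX₂ne : X₂.Nonempty := Finset.card_pos.mp (by omega)
  obtain ⟨p₁, hp₁⟩ := hX₁ne
  obtain ⟨p₂, hp₂⟩ := hX₂ne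
  have hr₁0 : 0 ≤ r₁ := (hs₁ p₁ hp₁) ▸ dist_nonneg
  have hr₂0 : 0 ≤ r₂ := (hs₂ p₂ hp₂) ▸ dist_nonneg
  have hout₁ : ∀ x ∈ η, r₁ ≤ dist x c₁ := by
    intro x hx
    by_contra h
    exact absurd (Set.mem_inter hx (Metric.mem_ball.mpr (not_le.mp h)))
      (by rw [hb₁]; exact Set.notMem_empty x)
  have hout₂ : ∀ x ∈ η, r₂ ≤ dist x c₂ := by
    intro x hx
    by_contra h
    exact absurd (Set.mem_inter hx (Metric.mem_ball.mpr (not_le.mp h)))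
      (by rw [hb₂]; exact Set.notMem_empty x)
  by_cases hcc : c₁ = c₂
  · -- same center: radii are equal, then general position forces X₁ = X₂
    have h12 : r₂ ≤ r₁ := by
      have := hout₂ p₁ (hX₁η hp₁)
      rw [← hcc, hs₁ p₁ hp₁] at this; exact this
    have h21 : r₁ ≤ r₂ := by
      have := hout₁ p₂ (hX₂η hp₂)
      rw [hcc, hs₂ p₂ hp₂] at this; exact this
    have hrr : r₁ = r₂ := le_antisymm h21 h12
    exfalso
    set s : Set (EuclideanSpace ℝ (Fin 2)) := η ∩ Metric.sphere c₁ r₁ with hs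
    have hsfin : s.Finite := hloc _ Metric.isBounded_sphere
    have hsub₁ : (X₁ : Set (EuclideanSpace ℝ (Fin 2))) ⊆ s := by
      intro x hx
      exact ⟨hX₁η hx, by simpa [Metric.mem_sphere, dist_eq_norm] using hs₁ x hx⟩
    have hsub₂ : (X₂ : Set (EuclideanSpace ℝ (Fin 2))) ⊆ s := by
      intro x hx
      refine ⟨hX₂η hx, ?_⟩
      have := hs₂ x hx
      simp only [Metric.mem_sphere]
      rw [hcc, this, hrr]
    have hns : s.ncard ≤ 3 := hgen c₁ r₁
    have hn₁ : (X₁ : Set (EuclideanSpace ℝ (Fin 2))).ncard = 3 := by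
      rw [Set.ncard_coe_finset]; exact hcard₁
    have hn₂ : (X₂ : Set (EuclideanSpace ℝ (Fin 2))).ncard = 3 := by
      rw [Set.ncard_coe_finset]; exact hcard₂
    have he₁ : (X₁ : Set (EuclideanSpace ℝ (Fin 2))) = s :=
      Set.eq_of_subset_of_ncard_le hsub₁ (by omega) hsfin
    have he₂ : (X₂ : Set (EuclideanSpace ℝ (Fin 2))) = s :=
      Set.eq_of_subset_of_ncard_le hsub₂ (by omega) hsfin
    exact hne (Finset.coe_injective (he₁.trans he₂.symm))
  · -- distinct centers: radical line separates the two triangles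
    set f : EuclideanSpace ℝ (Fin 2) →L[ℝ] ℝ := innerSL ℝ (c₂ - c₁) with hf
    set b : ℝ := (‖c₂‖ ^ 2 - ‖c₁‖ ^ 2 + r₁ ^ 2 - r₂ ^ 2) / 2 with hbdef
    have hfne : f ≠ 0 := by
      intro h
      have : (f : EuclideanSpace ℝ (Fin 2) →L[ℝ] ℝ) (c₂ - c₁) = 0 := by rw [h]; rfl
      rw [hf, innerSL_apply_apply, real_inner_self_eq_norm_sq] at this
      have hn : ‖c₂ - c₁‖ = 0 := pow_eq_zero_iff two_ne_zero |>.mp this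
      exact hcc (sub_eq_zero.mp (norm_eq_zero.mp hn)).symm
    -- key pointwise estimates
    have key : ∀ x : EuclideanSpace ℝ (Fin 2), dist x c₁ = r₁ → r₂ ≤ dist x c₂ →
        f x ≤ b := by
      intro x h1 h2
      have e1 : ‖x - c₁‖ ^ 2 = r₁ ^ 2 := by rw [← dist_eq_norm, h1]
      have e2 : r₂ ^ 2 ≤ ‖x - c₂‖ ^ 2 := by
        rw [← dist_eq_norm]; exact pow_le_pow_left₀ hr₂0 h2 2
      have q1 : ‖x - c₁‖ ^ 2 = ‖x‖ ^ 2 - 2 * inner ℝ x c₁ + ‖c₁‖ ^ 2 :=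
        norm_sub_sq_real x c₁
      have q2 : ‖x - c₂‖ ^ 2 = ‖x‖ ^ 2 - 2 * inner ℝ x c₂ + ‖c₂‖ ^ 2 :=
        norm_sub_sq_real x c₂
      have hfx : f x = inner ℝ x c₂ - inner ℝ x c₁ := by
        rw [hf, innerSL_apply_apply, inner_sub_left, real_inner_comm c₂ x,
          real_inner_comm c₁ x]
      rw [hfx, hbdef]; linarith
    have key' : ∀ x : EuclideanSpace ℝ (Fin 2), dist x c₂ = r₂ → r₁ ≤ dist x c₁ →
        b ≤ f x := by
      intro x h1 h2
      have e1 : ‖x - c₂‖ ^ 2 = r₂ ^ 2 := by rw [← dist_eq_norm, h1]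
      have e2 : r₁ ^ 2 ≤ ‖x - c₁‖ ^ 2 := by
        rw [← dist_eq_norm]; exact pow_le_pow_left₀ hr₁0 h2 2
      have q1 : ‖x - c₁‖ ^ 2 = ‖x‖ ^ 2 - 2 * inner ℝ x c₁ + ‖c₁‖ ^ 2 :=
        norm_sub_sq_real x c₁
      have q2 : ‖x - c₂‖ ^ 2 = ‖x‖ ^ 2 - 2 * inner ℝ x c₂ + ‖c₂‖ ^ 2 :=
        norm_sub_sq_real x c₂
      have hfx : f x = inner ℝ x c₂ - inner ℝ x c₁ := by
        rw [hf, innerSL_apply_apply, inner_sub_left, real_inner_comm c₂ x,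
          real_inner_comm c₁ x]
      rw [hfx, hbdef]; linarith
    have hconv₁ : (convexHull ℝ (X₁ : Set (EuclideanSpace ℝ (Fin 2)))) ⊆
        f ⁻¹' Set.Iic b := by
      apply convexHull_min
      · intro x hx
        exact key x (hs₁ x hx) (hout₂ x (hX₁η hx))
      · exact convex_halfSpace_le (f.toLinearMap.isLinear) b
    have hconv₂ : (convexHull ℝ (X₂ : Set (EuclideanSpace ℝ (Fin 2)))) ⊆
        f ⁻¹' Set.Ici b := by
      apply convexHull_min
      · intro x hx
        exact key' x (hs₂ x hx) (hout₁ x (hX₂η hx))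
      · exact convex_halfSpace_ge (f.toLinearMap.isLinear) b
    have hopen : IsOpenMap f := f.isOpenMap_of_ne_zero hfne
    have hint₁ : interior (convexHull ℝ (X₁ : Set (EuclideanSpace ℝ (Fin 2)))) ⊆
        f ⁻¹' Set.Iio b := by
      calc interior (convexHull ℝ (X₁ : Set (EuclideanSpace ℝ (Fin 2))))
          ⊆ interior (f ⁻¹' Set.Iic b) := interior_mono hconv₁
        _ = f ⁻¹' interior (Set.Iic b) :=
            (hopen.preimage_interior_eq_interior_preimage f.continuous _).symm
        _ = f ⁻¹' Set.Iio b := by rw [interior_Iic]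
    have hint₂ : interior (convexHull ℝ (X₂ : Set (EuclideanSpace ℝ (Fin 2)))) ⊆
        f ⁻¹' Set.Ioi b := by
      calc interior (convexHull ℝ (X₂ : Set (EuclideanSpace ℝ (Fin 2))))
          ⊆ interior (f ⁻¹' Set.Ici b) := interior_mono hconv₂
        _ = f ⁻¹' interior (Set.Ici b) :=
            (hopen.preimage_interior_eq_interior_preimage f.continuous _).symm
        _ = f ⁻¹' Set.Ioi b := by rw [interior_Ici]
    rw [Set.disjoint_left]
    intro x h1 h2
    have l1 : f x < b := hint₁ h1
    have l2 : b < f x := hint₂ h2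
    linarith
end

section
/- Let Λ = {(u + v√2, u − v√2) : u, v ∈ ℤ}, π(x, y) = x, and W = {(x, y) ∈ ℝ² : |y| ≤ 1/√2}. Then the projection π(Λ ∩ W) = {u + v√2 : u, v ∈ ℤ, |u − v√2| ≤ 1/√2} is a uniformly discrete subset of ℝ: there is r > 0 such that any two distinct points of π(Λ ∩ W) are at distance at least r. -/
lemma key_zero (a b : ℤ) (h : (a : ℝ) + b * Real.sqrt 2 = 0) : a = 0 ∧ b = 0 := by
  have hirr := irrational_sqrt_two
  by_cases hb : b = 0
  · subst hb
    simp at h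
    exact ⟨by exact_mod_cast h, rfl⟩
  · exfalso
    have hb' : (b : ℝ) ≠ 0 := Int.cast_ne_zero.mpr hb
    have : Real.sqrt 2 = (-a : ℝ) / b := by field_simp; linarith
    have : Irrational ((-a : ℝ) / b) := this ▸ hirr
    rw [show ((-a : ℝ) / b) = ((-a / b : ℚ) : ℝ) by push_cast; ring] at this
    exact this.ne_rat _ rfl

/-- The silver mean point set `S = {u + v√2 : u, v ∈ ℤ, |u − v√2| ≤ 1/√2}`
is uniformly discrete. -/
theorem stmt_11 :
    ∃ r > (0 : ℝ), ∀ x ∈ {x : ℝ | ∃ u v : ℤ, x = u + v * Real.sqrt 2 ∧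
        |(u : ℝ) - v * Real.sqrt 2| ≤ 1 / Real.sqrt 2},
      ∀ y ∈ {x : ℝ | ∃ u v : ℤ, x = u + v * Real.sqrt 2 ∧
        |(u : ℝ) - v * Real.sqrt 2| ≤ 1 / Real.sqrt 2},
      x ≠ y → r ≤ |x - y| := by
  have h2 : Real.sqrt 2 ^ 2 = 2 := Real.sq_sqrt (by norm_num)
  have hpos : (0 : ℝ) < Real.sqrt 2 := Real.sqrt_pos.mpr (by norm_num)
  refine ⟨1/2, by norm_num, ?_⟩
  rintro x ⟨u, v, rfl, hx⟩ y ⟨u', v', rfl, hy⟩ hne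
  set a : ℤ := u - u'
  set b : ℤ := v - v'
  have hdiff : ((u : ℝ) + v * Real.sqrt 2) - (u' + v' * Real.sqrt 2)
      = (a : ℝ) + b * Real.sqrt 2 := by push_cast [a, b]; ring
  have hstar : (a : ℝ) - b * Real.sqrt 2
      = ((u : ℝ) - v * Real.sqrt 2) - ((u' : ℝ) - v' * Real.sqrt 2) := by
    push_cast [a, b]; ring
  have hne0 : (a : ℝ) + b * Real.sqrt 2 ≠ 0 := by
    rw [← hdiff]; exact sub_ne_zero_of_ne hne
  -- a² - 2b² ≠ 0
  have hsq : (a ^ 2 - 2 * b ^ 2 : ℤ) ≠ 0 := by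
    intro h
    have hr : ((a : ℝ) + b * Real.sqrt 2) * ((a : ℝ) - b * Real.sqrt 2) = 0 := by
      have : ((a : ℝ) ^ 2 - 2 * b ^ 2) = 0 := by exact_mod_cast h
      nlinarith [h2]
    rcases mul_eq_zero.mp hr with h1 | h1
    · exact hne0 h1
    · have := key_zero a (-b) (by push_cast; linarith)
      exact hne0 (by rw [this.1, neg_eq_zero.mp this.2]; simp)
  have hsq1 : (1 : ℝ) ≤ |(a : ℝ) ^ 2 - 2 * b ^ 2| := by
    have : (1 : ℤ) ≤ |a ^ 2 - 2 * b ^ 2| := Int.one_le_abs hsq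
    calc (1:ℝ) = ((1:ℤ) : ℝ) := by norm_num
    _ ≤ ((|a ^ 2 - 2 * b ^ 2| : ℤ) : ℝ) := by exact_mod_cast this
    _ = |(a : ℝ) ^ 2 - 2 * b ^ 2| := by push_cast; ring_nf
  -- |a - b√2| ≤ √2
  have hstar_bound : |(a : ℝ) - b * Real.sqrt 2| ≤ Real.sqrt 2 := by
    rw [hstar]
    calc |((u : ℝ) - v * Real.sqrt 2) - ((u' : ℝ) - v' * Real.sqrt 2)|
        ≤ |(u : ℝ) - v * Real.sqrt 2| + |(u' : ℝ) - v' * Real.sqrt 2| := abs_sub _ _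
      _ ≤ 1 / Real.sqrt 2 + 1 / Real.sqrt 2 := add_le_add hx hy
      _ = Real.sqrt 2 := by
          rw [← add_div]
          field_simp
          nlinarith [h2]
  have hfactor : |(a : ℝ) + b * Real.sqrt 2| * |(a : ℝ) - b * Real.sqrt 2|
      = |(a : ℝ) ^ 2 - 2 * b ^ 2| := by
    rw [← abs_mul]
    congr 1
    nlinarith [h2]
  have habs : 1 / Real.sqrt 2 ≤ |(a : ℝ) + b * Real.sqrt 2| := by
    rcases eq_or_ne ((a : ℝ) - b * Real.sqrt 2) 0 with h0 | h0
    · exfalso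
      have := key_zero a (-b) (by push_cast; linarith)
      exact hne0 (by rw [this.1, neg_eq_zero.mp this.2]; simp)
    · have hpos' : 0 < |(a : ℝ) - b * Real.sqrt 2| := abs_pos.mpr h0
      rw [div_le_iff₀ hpos]
      calc 1 ≤ |(a : ℝ) ^ 2 - 2 * b ^ 2| := hsq1
        _ = |(a : ℝ) + b * Real.sqrt 2| * |(a : ℝ) - b * Real.sqrt 2| := hfactor.symm
        _ ≤ |(a : ℝ) + b * Real.sqrt 2| * Real.sqrt 2 :=
            mul_le_mul_of_nonneg_left hstar_bound (abs_nonneg _)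
  calc (1:ℝ)/2 ≤ 1 / Real.sqrt 2 := by
        rw [div_le_div_iff₀ (by norm_num) hpos]
        nlinarith [h2, hpos]
    _ ≤ |(a : ℝ) + b * Real.sqrt 2| := habs
    _ = |((u : ℝ) + v * Real.sqrt 2) - (u' + v' * Real.sqrt 2)| := by rw [hdiff]
end

section
/- The set S = {u + v√2 : u, v ∈ ℤ, |u − v√2| ≤ 1/√2} is relatively dense in ℝ: there exists R > 0 such that every interval of length R contains a point of S. -/
/-- The silver mean point set `S = {u + v√2 : u, v ∈ ℤ, |u − v√2| ≤ 1/√2}`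
is relatively dense in `ℝ`. -/
theorem stmt_12 :
    ∃ R > (0 : ℝ), ∀ t : ℝ, ∃ s ∈ {x : ℝ | ∃ u v : ℤ, x = u + v * Real.sqrt 2 ∧
      |(u : ℝ) - v * Real.sqrt 2| ≤ 1 / Real.sqrt 2}, s ∈ Set.Icc t (t + R) := by
  have hs : Real.sqrt 2 ^ 2 = 2 := Real.sq_sqrt (by norm_num)
  have h0 : (0:ℝ) < Real.sqrt 2 := Real.sqrt_pos.mpr (by norm_num)
  have h1 : (1:ℝ) < Real.sqrt 2 := by nlinarith
  have h2 : Real.sqrt 2 < 3/2 := by nlinarith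
  refine ⟨4, by norm_num, fun t => ?_⟩
  set s2 := Real.sqrt 2
  set v : ℤ := ⌈(t + 1/2)/(2*s2)⌉ with hv
  set u : ℤ := ⌊(v:ℝ)*s2 + 1/2⌋ with hu
  have hv1 : (t + 1/2)/(2*s2) ≤ (v:ℝ) := Int.le_ceil _
  have hv2 : (v:ℝ) < (t + 1/2)/(2*s2) + 1 := Int.ceil_lt_add_one _
  have h2s : (0:ℝ) < 2*s2 := by linarith
  have hv1' : t + 1/2 ≤ 2*s2*(v:ℝ) := by
    rw [div_le_iff₀ h2s] at hv1; linarith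
  have hv2' : 2*s2*(v:ℝ) < t + 1/2 + 2*s2 := by
    have : 2*s2*((v:ℝ)-1) < t + 1/2 := by
      have h := (lt_div_iff₀ h2s).mp (show (v:ℝ)-1 < (t+1/2)/(2*s2) by linarith)
      linarith
    nlinarith
  have hu1 : (u:ℝ) ≤ (v:ℝ)*s2 + 1/2 := Int.floor_le _
  have hu2 : (v:ℝ)*s2 + 1/2 < (u:ℝ) + 1 := Int.lt_floor_add_one _
  refine ⟨(u:ℝ) + (v:ℝ)*s2, ⟨u, v, rfl, ?_⟩, ?_, ?_⟩
  · have hhalf : (1:ℝ)/2 ≤ 1/s2 := by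
      rw [div_le_div_iff₀ (by norm_num) h0]; nlinarith
    rw [abs_le]
    constructor <;> linarith
  · nlinarith
  · nlinarith
end

section
/- Consecutive points of the silver mean point set S = {u + v√2 : u, v ∈ ℤ, |u − v√2| ≤ 1/√2} differ by either 1 or 1 + √2: if s < t are elements of S with no element of S strictly between them, then t − s ∈ {1, 1 + √2}. -/
/-- Consecutive points of the silver mean point set differ by `1` or `1 + √2`. -/
theorem stmt_13 (S : Set ℝ)
    (hS : S = {x : ℝ | ∃ u v : ℤ, x = u + v * Real.sqrt 2 ∧
      |(u : ℝ) - v * Real.sqrt 2| ≤ 1 / Real.sqrt 2})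
    (s t : ℝ) (hs : s ∈ S) (ht : t ∈ S) (hlt : s < t)
    (hgap : ∀ x ∈ S, ¬(s < x ∧ x < t)) :
    t - s = 1 ∨ t - s = 1 + Real.sqrt 2 := by
  set r := Real.sqrt 2 with hrdef
  have hr2 : r * r = 2 := Real.mul_self_sqrt (by norm_num)
  have hrnn : 0 ≤ r := Real.sqrt_nonneg 2
  have hr1 : 1 < r := by nlinarith
  have hr32 : r < 3/2 := by nlinarith [sq_nonneg (r - 3/2)]
  have hrpos : 0 < r := by linarith
  -- irrationality lemma
  have hirr : ∀ p q : ℤ, q ≠ 0 → (p : ℝ) ≠ q * r := by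
    intro p q hq h
    have hq' : (q : ℝ) ≠ 0 := Int.cast_ne_zero.mpr hq
    apply irrational_sqrt_two
    refine ⟨(p / q : ℚ), ?_⟩
    push_cast
    rw [← hrdef]
    field_simp
    linarith [h]
  have h1r : 1 / r = r / 2 := by
    field_simp
    nlinarith
  -- strict window
  have strictwin : ∀ u v : ℤ, |(u : ℝ) - v * r| ≤ 1 / r →
      -(r/2) < (u : ℝ) - v * r ∧ (u : ℝ) - v * r < r / 2 := by
    intro u v h
    rw [h1r, abs_le] at h
    obtain ⟨h1, h2⟩ := h
    constructor
    · rcases lt_or_eq_of_le h1 with h' | h'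
      · exact h'
      · exfalso
        apply hirr (2*u) (2*v - 1) (by omega)
        push_cast
        nlinarith [h']
    · rcases lt_or_eq_of_le h2 with h' | h'
      · exact h'
      · exfalso
        apply hirr (2*u) (2*v + 1) (by omega)
        push_cast
        nlinarith [h']
  subst hS
  obtain ⟨u₁, v₁, hseq, hsw⟩ := hs
  obtain ⟨u₂, v₂, hteq, htw⟩ := ht
  obtain ⟨hw1l, hw1u⟩ := strictwin u₁ v₁ hsw
  obtain ⟨hw2l, hw2u⟩ := strictwin u₂ v₂ htw
  -- there is a point of S at s+1 or s+1+r : hence t - s ≤ 1 + r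
  have hbound : t - s ≤ 1 + r := by
    by_cases hc : (u₁ : ℝ) - v₁ * r < r/2 - 1
    · -- s + 1 ∈ S
      have hmem : s + 1 ∈ {x : ℝ | ∃ u v : ℤ, x = u + v * Real.sqrt 2 ∧
          |(u : ℝ) - v * Real.sqrt 2| ≤ 1 / Real.sqrt 2} := by
        refine ⟨u₁ + 1, v₁, by push_cast; rw [← hrdef]; linarith, ?_⟩
        rw [← hrdef, h1r, abs_le]
        push_cast
        constructor <;> linarith
      have := hgap _ hmem
      have ht1 : ¬ (s + 1 < t) := fun h => this ⟨by linarith, h⟩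
      linarith [not_lt.mp ht1]
    · push_neg at hc
      have hc' : r/2 - 1 < (u₁ : ℝ) - v₁ * r := by
        rcases lt_or_eq_of_le hc with h' | h'
        · exact h'
        · exfalso
          apply hirr (2*u₁ + 2) (2*v₁ + 1) (by omega)
          push_cast
          nlinarith [h']
      -- s + 1 + r ∈ S
      have hmem : s + 1 + r ∈ {x : ℝ | ∃ u v : ℤ, x = u + v * Real.sqrt 2 ∧
          |(u : ℝ) - v * Real.sqrt 2| ≤ 1 / Real.sqrt 2} := by
        refine ⟨u₁ + 1, v₁ + 1, by push_cast; rw [← hrdef]; linarith, ?_⟩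
        rw [← hrdef, h1r, abs_le]
        push_cast
        constructor <;> linarith
      have := hgap _ hmem
      have ht1 : ¬ (s + 1 + r < t) := fun h => this ⟨by linarith, h⟩
      linarith [not_lt.mp ht1]
  -- enumeration
  obtain ⟨a, b, hd, hstar_l, hstar_u⟩ :
      ∃ a b : ℤ, t - s = (a : ℝ) + b * r ∧ -r < (a : ℝ) - b * r ∧ (a : ℝ) - b * r < r :=
    ⟨u₂ - u₁, v₂ - v₁, by push_cast; linarith, by push_cast; linarith, by push_cast; linarith⟩
  have hd0 : (0 : ℝ) < (a : ℝ) + b * r := by rw [← hd]; linarith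
  have hd1 : (a : ℝ) + b * r ≤ 1 + r := by rw [← hd]; exact hbound
  have ha0 : 0 ≤ a := by
    by_contra h
    have ha' : a ≤ -1 := by omega
    have : (a : ℝ) ≤ -1 := by exact_mod_cast ha'
    linarith
  have ha1 : a ≤ 1 := by
    by_contra h
    have : (2 : ℝ) ≤ (a : ℝ) := by exact_mod_cast (by omega : (2:ℤ) ≤ a)
    linarith
  have hb0 : 0 ≤ b := by
    by_contra h
    have hb'' : b ≤ -1 := by omega
    have hb' : (b : ℝ) ≤ -1 := by exact_mod_cast hb''
    have := mul_le_mul_of_nonneg_right hb' hrnn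
    linarith
  have hb1 : b ≤ 1 := by
    by_contra h
    have hb' : (2 : ℝ) ≤ (b : ℝ) := by exact_mod_cast (by omega : (2:ℤ) ≤ b)
    have := mul_le_mul_of_nonneg_right hb' hrnn
    linarith
  have hcases : (a = 0 ∨ a = 1) ∧ (b = 0 ∨ b = 1) := by omega
  rcases hcases with ⟨(rfl | rfl), (rfl | rfl)⟩
  · exfalso; simp at hd0
  · exfalso; push_cast at hstar_l; linarith
  · left; rw [hd]; push_cast; ring
  · right; rw [hd]; push_cast; ring
end
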